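/- Let f : [0,∞) → ℝ be non-decreasing, concave with f(0) = 0, and define F(M) = ∑_{i=1}^d f(λ_i(M)) for M positive semidefinite of size d×d, where λ_i(M) are the eigenvalues of M. Then for every d×d positive semidefinite matrix M and every d×d orthogonal matrix Q, F(M) ≤ ∑_{i=1}^d f((Qᵀ M Q)_{ii}). -/

import Mathlib

open Matrix BigOperators

theorem stmt0 {d : ℕ} (f : ℝ → ℝ)
    (hmono : MonotoneOn f (Set.Ici 0)) (hconc : ConcaveOn ℝ (Set.Ici 0) f)
    (hf0 : f 0 = 0)
    (M : Matrix (Fin d) (Fin d) ℝ) (hM : M.PosSemidef)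
    (Q : Matrix (Fin d) (Fin d) ℝ) (hQ : Qᵀ * Q = 1) :
    ∑ i, f (hM.1.eigenvalues i) ≤ ∑ i, f ((Qᵀ * M * Q) i i) := by
  have hA := hM.1
  set U : Matrix (Fin d) (Fin d) ℝ := (hA.eigenvectorUnitary : Matrix (Fin d) (Fin d) ℝ) with hUdef
  have hU1 : star U * U = 1 := (Matrix.mem_unitaryGroup_iff').mp hA.eigenvectorUnitary.2
  have hU2 : U * star U = 1 := (Matrix.mem_unitaryGroup_iff).mp hA.eigenvectorUnitary.2
  set V : Matrix (Fin d) (Fin d) ℝ := Qᵀ * U with hVdef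
  have hQQ : Q * Qᵀ = 1 := by
    rw [mul_eq_one_comm] at hQ; exact hQ
  have hV1 : Vᵀ * V = 1 := by
    have : star U = Uᵀ := rfl
    simp [hVdef, Matrix.transpose_mul, mul_assoc]
    rw [← mul_assoc Q, hQQ, one_mul, ← this, hU1]
  have hV2 : V * Vᵀ = 1 := by rw [mul_eq_one_comm] at hV1; exact hV1
  -- diagonal entry formula
  have hdiag : ∀ i, (Qᵀ * M * Q) i i = ∑ j, (V i j)^2 * hA.eigenvalues j := by
    intro i
    have hspec : M = U * Matrix.diagonal hA.eigenvalues * Uᵀ := by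
      have := hA.spectral_theorem
      simp at this; exact this
    have key : Qᵀ * M * Q = V * Matrix.diagonal hA.eigenvalues * Vᵀ := by
      conv_lhs => rw [hspec]
      simp [hVdef, Matrix.transpose_mul, mul_assoc]
    rw [key, Matrix.mul_apply]
    simp only [Matrix.mul_diagonal, Matrix.transpose_apply]
    exact Finset.sum_congr rfl fun j _ => by ring
  have hev : ∀ j, (0:ℝ) ≤ hA.eigenvalues j := fun j => hM.eigenvalues_nonneg j
  have hcol : ∀ j, ∑ i, (V i j)^2 = 1 := by
    intro j
    have h := congrFun (congrFun hV1 j) j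
    simpa [Matrix.mul_apply, Matrix.transpose_apply, pow_two] using h
  have hrow : ∀ i, ∑ j, (V i j)^2 = 1 := by
    intro i
    have h := congrFun (congrFun hV2 i) i
    simpa [Matrix.mul_apply, Matrix.transpose_apply, pow_two] using h
  have step : ∀ i, ∑ j, (V i j)^2 * f (hA.eigenvalues j) ≤ f ((Qᵀ * M * Q) i i) := by
    intro i
    rw [hdiag i]
    have h := hconc.le_map_sum (t := Finset.univ) (w := fun j => (V i j)^2)
      (p := hA.eigenvalues) (fun j _ => sq_nonneg _) (hrow i) (fun j _ => hev j)
    simpa [smul_eq_mul] using h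
  calc ∑ i, f (hA.eigenvalues i)
      = ∑ i, ∑ j, (V j i)^2 * f (hA.eigenvalues i) := by
        refine Finset.sum_congr rfl fun i _ => ?_
        rw [← Finset.sum_mul, hcol i, one_mul]
    _ = ∑ j, ∑ i, (V j i)^2 * f (hA.eigenvalues i) := Finset.sum_comm
    _ ≤ ∑ i, f ((Qᵀ * M * Q) i i) := Finset.sum_le_sum fun j _ => step j
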